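/- Let f : ∏_{i=1}^{D}[a_i,b_i] → ℝ be continuous on a product of compact intervals, Lipschitz with constant L w.r.t. the Euclidean norm, such that no boundary point of the hypercube is ε-high, and L < 2(ε(y_max − y_min) + y_min − M_1)/(b_1 − a_1), where M_1 = max over the face x_1 = a_1 of f and y_min, y_max are the global min and max of f. Assume the 1-dimensional statement: every slice function of one variable satisfying the analogous hypotheses has superlevel set of measure at most half the interval. Then the set H of ε-high points satisfies μ_D(H) ≤ μ_D(Hᶜ). -/

import Mathlib

open MeasureTheory Set

theorem stmt15 (d : ℕ) (L ymin ymax ε M1 : ℝ)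
    (A B : Fin (d + 1) → ℝ) (hAB : ∀ i, A i < B i)
    (f : EuclideanSpace ℝ (Fin (d + 1)) → ℝ)
    (Box : Set (EuclideanSpace ℝ (Fin (d + 1))))
    (hBox : Box = {x | ∀ i, x i ∈ Set.Icc (A i) (B i)})
    (hcont : ContinuousOn f Box)
    (hlip : ∀ x ∈ Box, ∀ z ∈ Box, |f x - f z| ≤ L * dist x z)
    (hmin : ∀ x ∈ Box, ymin ≤ f x) (hmin' : ∃ x ∈ Box, f x = ymin)
    (hmax : ∀ x ∈ Box, f x ≤ ymax) (hmax' : ∃ x ∈ Box, f x = ymax)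
    (hε : ε ∈ Set.Ioc (1/2 : ℝ) 1)
    (hbdry : ∀ x ∈ Box, (∃ i, x i = A i ∨ x i = B i) →
      f x < ymin + ε * (ymax - ymin))
    (hM1 : ∀ x ∈ Box, x 0 = A 0 → f x ≤ M1)
    (hM1' : ∃ x ∈ Box, x 0 = A 0 ∧ f x = M1)
    (hL : L < 2 * (ε * (ymax - ymin) + ymin - M1) / (B 0 - A 0))
    -- the assumed one-dimensional statement
    (h1d : ∀ (g : ℝ → ℝ) (u v ℓ gmin gmax : ℝ),
      u < v →
      ContinuousOn g (Set.Icc u v) →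
      (∀ x ∈ Set.Icc u v, ∀ z ∈ Set.Icc u v, |g x - g z| ≤ ℓ * |x - z|) →
      (∀ x ∈ Set.Icc u v, gmin ≤ g x) → (∃ x ∈ Set.Icc u v, g x = gmin) →
      (∀ x ∈ Set.Icc u v, g x ≤ gmax) → (∃ x ∈ Set.Icc u v, g x = gmax) →
      g u < gmin + ε * (gmax - gmin) →
      g v < gmin + ε * (gmax - gmin) →
      ℓ < 2 * (ε * (gmax - gmin) + gmin - min (g u) (g v)) / (v - u) →
      volume {x ∈ Set.Icc u v | gmin + ε * (gmax - gmin) ≤ g x}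
        ≤ volume (Set.Icc u v \ {x ∈ Set.Icc u v | gmin + ε * (gmax - gmin) ≤ g x})) :
    volume {x ∈ Box | ymin + ε * (ymax - ymin) ≤ f x}
      ≤ volume (Box \ {x ∈ Box | ymin + ε * (ymax - ymin) ≤ f x}) := by
  classical
  set τ := ymin + ε * (ymax - ymin) with hτ
  set H := {x ∈ Box | τ ≤ f x} with hH
  obtain ⟨w, hwBox, hw0, hwM1⟩ := hM1'
  have hM1τ : M1 < τ := hwM1 ▸ hbdry w hwBox ⟨0, Or.inl hw0⟩
  have hA0B0 : A 0 < B 0 := hAB 0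
  set m := (A 0 + B 0) / 2 with hm
  have hmA : A 0 < m := by rw [hm]; linarith
  have hmB : m < B 0 := by rw [hm]; linarith
  -- key strict bound: every high point has x 0 > m
  have hstrict : ∀ x ∈ H, m < x 0 := by
    rintro x ⟨hxBox, hxτ⟩
    set z : EuclideanSpace ℝ (Fin (d + 1)) := WithLp.toLp 2 (Function.update x 0 (A 0)) with hz
    have hzBox : z ∈ Box := by
      rw [hBox]
      intro i
      rcases eq_or_ne i 0 with h | h
      · subst h
        simp [hz, Function.update_self, le_of_lt hA0B0]
      · simp only [hz, Function.update_of_ne h]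
        have : x ∈ {x : EuclideanSpace ℝ (Fin (d+1)) | ∀ i, x i ∈ Set.Icc (A i) (B i)} := hBox ▸ hxBox
        exact this i
    have hz0 : z 0 = A 0 := Function.update_self 0 (A 0) x
    have hfz : f z ≤ M1 := hM1 z hzBox hz0
    have hxBox' : ∀ i, x i ∈ Set.Icc (A i) (B i) := by rw [hBox] at hxBox; exact hxBox
    have hx0 : A 0 ≤ x 0 ∧ x 0 ≤ B 0 := hxBox' 0
    have hdist : dist x z = x 0 - A 0 := by
      rw [EuclideanSpace.dist_eq]
      have hsum : (∑ i, dist (x i) (z i) ^ 2) = (x 0 - A 0) ^ 2 := by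
        rw [Finset.sum_eq_single 0]
        · rw [hz0, Real.dist_eq, sq_abs]
        · intro i _ h
          simp [hz, Function.update_of_ne h]
        · simp
      rw [hsum, Real.sqrt_sq (by linarith [hx0.1])]
    have hlipx := hlip x hxBox z hzBox
    have key : τ - M1 ≤ L * (x 0 - A 0) := by
      calc τ - M1 ≤ f x - f z := by linarith
        _ ≤ |f x - f z| := le_abs_self _
        _ ≤ L * dist x z := hlipx
        _ = L * (x 0 - A 0) := by rw [hdist]
    have hL0 : 0 < L := by
      by_contra h
      push_neg at h
      nlinarith [mul_nonpos_of_nonpos_of_nonneg h (sub_nonneg.2 hx0.1)]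
    have hL' : L * (B 0 - A 0) < 2 * (τ - M1) := by
      have hpos : (0:ℝ) < B 0 - A 0 := by linarith
      have h2 := (lt_div_iff₀ hpos).mp hL
      rw [hτ]
      linarith
    nlinarith [key, hL0, hL']
  -- the two half boxes
  set U : Fin (d + 1) → ℝ := Function.update A 0 m with hU
  set V : Fin (d + 1) → ℝ := Function.update B 0 m with hV
  set SR := {x : EuclideanSpace ℝ (Fin (d + 1)) | ∀ i, x i ∈ Set.Icc (U i) (B i)} with hSR
  set SL := {x : EuclideanSpace ℝ (Fin (d + 1)) | ∀ i, x i ∈ Set.Icc (A i) (V i)} with hSL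
  have hHsub : H ⊆ SR := by
    intro x hx
    intro i
    rcases eq_or_ne i 0 with h | h
    · subst h
      have hxBox' : ∀ i, x i ∈ Set.Icc (A i) (B i) := by
        have := hx.1; rw [hBox] at this; exact this
      exact ⟨by simp only [hU, Function.update_self]; exact le_of_lt (hstrict x hx), (hxBox' 0).2⟩
    · simp only [hU, Function.update_of_ne h]
      have hxBox' : ∀ i, x i ∈ Set.Icc (A i) (B i) := by
        have := hx.1; rw [hBox] at this; exact this
      exact hxBox' i
  have hSLsub : SL ⊆ Box \ H := by
    intro x hx
    have hxBox : x ∈ Box := by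
      rw [hBox]
      intro i
      rcases eq_or_ne i 0 with h | h
      · subst h
        have := hx 0
        simp only [hV, Function.update_self] at this
        exact ⟨this.1, le_trans this.2 (le_of_lt hmB)⟩
      · have := hx i
        simpa [hV, Function.update_of_ne h] using this
    refine ⟨hxBox, fun hxH => ?_⟩
    have h1 := hstrict x hxH
    have h2 := (hx 0).2
    simp only [hV, Function.update_self] at h2
    linarith
  -- volume of boxes
  have hvol : ∀ (P Q : Fin (d + 1) → ℝ),
      volume {x : EuclideanSpace ℝ (Fin (d + 1)) | ∀ i, x i ∈ Set.Icc (P i) (Q i)}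
        = ∏ i, ENNReal.ofReal (Q i - P i) := by
    intro P Q
    have hpre : {x : EuclideanSpace ℝ (Fin (d + 1)) | ∀ i, x i ∈ Set.Icc (P i) (Q i)}
        = (MeasurableEquiv.toLp 2 (Fin (d + 1) → ℝ)).symm ⁻¹'
          (Set.pi Set.univ fun i => Set.Icc (P i) (Q i)) := by
      ext x
      simp only [Set.mem_setOf_eq, Set.mem_preimage, Set.mem_pi, Set.mem_univ, true_implies]
      exact Iff.rfl
    rw [hpre,
      (EuclideanSpace.volume_preserving_symm_measurableEquiv_toLp (Fin (d + 1))).measure_preimage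
        ((MeasurableSet.univ_pi fun i => measurableSet_Icc).nullMeasurableSet),
      volume_pi_pi]
    simp [Real.volume_Icc]
  have hvolEq : volume SR = volume SL := by
    rw [hSR, hSL, hvol, hvol]
    refine Finset.prod_congr rfl fun i _ => ?_
    rcases eq_or_ne i 0 with h | h
    · subst h
      simp only [hU, hV, Function.update_self]
      congr 1
      rw [hm]; ring
    · simp [hU, hV, Function.update_of_ne h]
  calc volume H ≤ volume SR := measure_mono hHsub
    _ = volume SL := hvolEq
    _ ≤ volume (Box \ H) := measure_mono hSLsub
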